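/- Let H be a real Hilbert space, let T and 𝒜 be bounded linear operators on H with T injective, let D := range(T), and let A : H → H be any function satisfying A(T v) = 𝒜 v for every v ∈ H. Let ω ∈ ℝ and λ > ω. Then the following two conditions hold simultaneously: (1) ⟨T v, 𝒜 v⟩ ≤ ω ⟨T v, T v⟩ for all v ∈ H, and (2) there exists ε > 0 such that ‖(λT − 𝒜)* v‖ ≥ ε ‖v‖ for all v ∈ H; if and only if the following two conditions hold simultaneously: (1') ⟨u, A u − ω u⟩ ≤ 0 for all u ∈ D, and (2') for every w ∈ H there exists u ∈ D with λ u − A u = w. -/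

import Mathlib

open scoped RealInnerProductSpace

/-- If the adjoint of `B` is bounded below, then `B` is surjective. -/
lemma surjective_of_adjoint_bounded_below
    {H : Type*} [NormedAddCommGroup H] [InnerProductSpace ℝ H] [CompleteSpace H]
    (B : H →L[ℝ] H) {ε : ℝ} (hε : 0 < ε)
    (h : ∀ v : H, ε * ‖v‖ ≤ ‖ContinuousLinearMap.adjoint B v‖) :
    Function.Surjective ⇑B := by
  set C := ContinuousLinearMap.adjoint B with hC
  set S : H →L[ℝ] H := B.comp C with hS
  set 𝓑 : H →L[ℝ] H →L[ℝ] ℝ := (innerSL ℝ).comp S with h𝓑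
  have hcoer : IsCoercive 𝓑 := by
    refine ⟨ε ^ 2, by positivity, fun v => ?_⟩
    have h1 : 𝓑 v v = ⟪C v, C v⟫ := by
      simp only [h𝓑, hS, ContinuousLinearMap.comp_apply, innerSL_apply_apply, hC]
      rw [real_inner_comm, ← ContinuousLinearMap.adjoint_inner_left]
    rw [h1, real_inner_self_eq_norm_sq]
    nlinarith [norm_nonneg v, norm_nonneg (C v), h v, mul_nonneg hε.le (norm_nonneg v)]
  have hrange := hcoer.range_eq_top
  intro w
  obtain ⟨v, hv⟩ : ∃ v, InnerProductSpace.continuousLinearMapOfBilin 𝓑 v = w := by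
    have : w ∈ LinearMap.range (InnerProductSpace.continuousLinearMapOfBilin 𝓑 : H →ₗ[ℝ] H) := by
      rw [hrange]; trivial
    exact this
  have hSv : S v = InnerProductSpace.continuousLinearMapOfBilin 𝓑 v := by
    apply InnerProductSpace.unique_continuousLinearMapOfBilin
    intro y
    simp only [h𝓑, ContinuousLinearMap.comp_apply]
    rfl
  exact ⟨C v, by rw [← hv, ← hSv]; rfl⟩

/-- If `B` is surjective, then its adjoint is bounded below. -/
lemma adjoint_bounded_below_of_surjective
    {H : Type*} [NormedAddCommGroup H] [InnerProductSpace ℝ H] [CompleteSpace H]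
    (B : H →L[ℝ] H) (h : Function.Surjective ⇑B) :
    ∃ ε > (0 : ℝ), ∀ v : H, ε * ‖v‖ ≤ ‖ContinuousLinearMap.adjoint B v‖ := by
  obtain ⟨C, Cpos, hC⟩ := B.exists_preimage_norm_le h
  refine ⟨C⁻¹, inv_pos.mpr Cpos, fun v => ?_⟩
  rcases eq_or_ne v 0 with rfl | hv
  · simp
  obtain ⟨u, hu, hnu⟩ := hC v
  have h1 : ‖v‖ ^ 2 = ⟪u, ContinuousLinearMap.adjoint B v⟫ := by
    rw [ContinuousLinearMap.adjoint_inner_right, hu, real_inner_self_eq_norm_sq]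
  have h2 : ‖v‖ ^ 2 ≤ C * ‖v‖ * ‖ContinuousLinearMap.adjoint B v‖ := by
    calc ‖v‖ ^ 2 = ⟪u, ContinuousLinearMap.adjoint B v⟫ := h1
      _ ≤ ‖u‖ * ‖ContinuousLinearMap.adjoint B v‖ := real_inner_le_norm _ _
      _ ≤ C * ‖v‖ * ‖ContinuousLinearMap.adjoint B v‖ := by
          apply mul_le_mul_of_nonneg_right hnu (norm_nonneg _)
  have hvpos : (0:ℝ) < ‖v‖ := norm_pos_iff.mpr hv
  rw [inv_mul_le_iff₀ Cpos]
  calc ‖v‖ ≤ C * ‖ContinuousLinearMap.adjoint B v‖ := by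
        have := (mul_le_mul_iff_of_pos_right hvpos).mp (by nlinarith : ‖v‖ * ‖v‖ ≤ (C * ‖ContinuousLinearMap.adjoint B v‖) * ‖v‖)
        exact this
    _ = C * ‖ContinuousLinearMap.adjoint B v‖ := rfl

/-- Theorem 2 of the paper: the PIE-representation conditions
(weighted dissipativity of `{T, 𝒜}` and lower bound on `(λT − 𝒜)*`) are equivalent to the
Lumer–Phillips conditions (dissipativity of `A − ωI` on `D = range T` and surjectivity of
`λI − A : D → H`). -/
theorem PIE_conditions_iff_LumerPhillips_conditions
    {H : Type*} [NormedAddCommGroup H] [InnerProductSpace ℝ H] [CompleteSpace H]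
    (T Aop : H →L[ℝ] H) (hT : Function.Injective ⇑T) (A : H → H)
    (hA : ∀ v : H, A (T v) = Aop v) (ω lam : ℝ) (hlam : ω < lam) :
    ((∀ v : H, ⟪T v, Aop v⟫ ≤ ω * ⟪T v, T v⟫) ∧
      ∃ ε > (0 : ℝ), ∀ v : H,
        ε * ‖v‖ ≤ ‖ContinuousLinearMap.adjoint (lam • T - Aop) v‖) ↔
    ((∀ u ∈ Set.range ⇑T, ⟪u, A u - ω • u⟫ ≤ 0) ∧
      ∀ w : H, ∃ u ∈ Set.range ⇑T, lam • u - A u = w) := by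
  set B : H →L[ℝ] H := lam • T - Aop with hB
  have hBapp : ∀ v : H, B v = lam • T v - Aop v := fun v => by
    simp [hB, ContinuousLinearMap.sub_apply, ContinuousLinearMap.smul_apply]
  have hdiss : (∀ v : H, ⟪T v, Aop v⟫ ≤ ω * ⟪T v, T v⟫) ↔
      (∀ u ∈ Set.range ⇑T, ⟪u, A u - ω • u⟫ ≤ 0) := by
    constructor
    · rintro h u ⟨v, rfl⟩
      rw [hA, inner_sub_right, real_inner_smul_right]
      linarith [h v]
    · intro h v
      have := h (T v) ⟨v, rfl⟩
      rw [hA, inner_sub_right, real_inner_smul_right] at this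
      linarith
  have hsurj : Function.Surjective ⇑B ↔
      (∀ w : H, ∃ u ∈ Set.range ⇑T, lam • u - A u = w) := by
    constructor
    · intro h w
      obtain ⟨v, hv⟩ := h w
      exact ⟨T v, ⟨v, rfl⟩, by rw [hA, ← hBapp, hv]⟩
    · intro h w
      obtain ⟨u, ⟨v, rfl⟩, hu⟩ := h w
      exact ⟨v, by rw [hBapp, ← hA, hu]⟩
  constructor
  · rintro ⟨h1, ε, hε, h2⟩
    exact ⟨hdiss.mp h1, hsurj.mp (surjective_of_adjoint_bounded_below B hε h2)⟩
  · rintro ⟨h1, h2⟩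
    exact ⟨hdiss.mpr h1, adjoint_bounded_below_of_surjective B (hsurj.mpr h2)⟩
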